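/- Let G be a finite abelian group, 1 ≤ p ≤ 2 and 1 ≤ q ≤ 2. Suppose Σ ⊆ Ĝ satisfies the (p,q)-restriction estimate with constant ρ, i.e. ‖ĝ‖_{ℓ^q(Σ)} ≤ ρ ‖g‖_{ℓ^p(G)} for all g. Let S ⊆ G with ρ |S|^{1/p} < |G|^{1/q − 1/2}. Then for every f : G → ℂ, ‖f‖_{ℓ²(G)} ≤ (1 + |S|^{1/2} |Ĝ∖Σ|^{1/q − 1/2} / (|G|^{1/q−1/2} − ρ|S|^{1/p})) · (‖f‖_{ℓ²(G∖S)} + ‖f̂‖_{ℓ²(Ĝ∖Σ)}). -/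

import Mathlib

open Finset ComplexConjugate

/-- ℓ²-norm of `f` over the finite set `T`. -/
noncomputable def l2norm {α : Type*} (T : Finset α) (f : α → ℂ) : ℝ :=
  Real.sqrt (∑ x ∈ T, ‖f x‖ ^ 2)

/-- ℓ^p-norm (p a real exponent) of `f` over the finite set `T`. -/
noncomputable def lpnorm {α : Type*} (p : ℝ) (T : Finset α) (f : α → ℂ) : ℝ :=
  (∑ x ∈ T, ‖f x‖ ^ p) ^ (1 / p)

/-- The unitary Fourier transform on a finite abelian group:
`f̂(χ) = |G|^{-1/2} ∑_x f x * conj (χ x)`. -/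
noncomputable def dft {G : Type*} [AddCommGroup G] [Fintype G]
    (f : G → ℂ) (χ : AddChar G ℂ) : ℂ :=
  (Real.sqrt (Fintype.card G) : ℂ)⁻¹ * ∑ x, f x * conj (χ x)

/-- the `q ≤ 2` version of the uncertainty principle for sets satisfying a
`(p,q)`-restriction estimate. -/
lemma lpnorm_nonneg {α : Type*} (p : ℝ) (T : Finset α) (f : α → ℂ) : 0 ≤ lpnorm p T f :=
  Real.rpow_nonneg (Finset.sum_nonneg fun x _ => Real.rpow_nonneg (norm_nonneg _) _) _

lemma l2norm_nonneg {α : Type*} (T : Finset α) (f : α → ℂ) : 0 ≤ l2norm T f :=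
  Real.sqrt_nonneg _

lemma l2norm_eq_lpnorm {α : Type*} (T : Finset α) (f : α → ℂ) :
    l2norm T f = lpnorm 2 T f := by
  rw [l2norm, lpnorm, Real.sqrt_eq_rpow]
  congr 1
  refine Finset.sum_congr rfl fun x _ => ?_
  rw [← Real.rpow_natCast (‖f x‖) 2]
  norm_num

-- Hölder comparison
lemma lpnorm_le_lpnorm {α : Type*} (T : Finset α) (u : α → ℂ) {a b : ℝ}
    (ha : 1 ≤ a) (hab : a ≤ b) :
    lpnorm a T u ≤ (T.card : ℝ) ^ (1 / a - 1 / b) * lpnorm b T u := by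
  have ha0 : 0 < a := lt_of_lt_of_le one_pos ha
  have hb0 : 0 < b := lt_of_lt_of_le ha0 hab
  have hba : 1 ≤ b / a := (one_le_div ha0).2 hab
  have key := Real.inner_le_weight_mul_Lp_of_nonneg T hba (fun _ => (1 : ℝ))
      (fun x => ‖u x‖ ^ a) (fun _ => zero_le_one)
      (fun x => Real.rpow_nonneg (norm_nonneg _) _)
  simp only [one_mul, Finset.sum_const, nsmul_eq_mul, mul_one] at key
  have hrw : ∀ x, (‖u x‖ ^ a) ^ (b / a) = ‖u x‖ ^ b := by
    intro x
    rw [← Real.rpow_mul (norm_nonneg _)]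
    congr 1; field_simp
  simp only [hrw] at key
  -- key : ∑ ‖u‖^a ≤ card^(1 - (b/a)⁻¹) * (∑ ‖u‖^b)^(b/a)⁻¹
  have hsum_nonneg : (0:ℝ) ≤ ∑ x ∈ T, ‖u x‖ ^ b :=
    Finset.sum_nonneg fun x _ => Real.rpow_nonneg (norm_nonneg _) _
  have h1 : lpnorm a T u ≤ ((T.card : ℝ) ^ (1 - (b/a)⁻¹) * (∑ x ∈ T, ‖u x‖ ^ b) ^ (b/a)⁻¹) ^ (1/a) := by
    rw [lpnorm]
    exact Real.rpow_le_rpow (Finset.sum_nonneg fun x _ => Real.rpow_nonneg (norm_nonneg _) _)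
      key (by positivity)
  refine h1.trans_eq ?_
  rw [Real.mul_rpow (Real.rpow_nonneg (Nat.cast_nonneg _) _) (Real.rpow_nonneg hsum_nonneg _),
    ← Real.rpow_mul (Nat.cast_nonneg _), ← Real.rpow_mul hsum_nonneg]
  rw [lpnorm]
  have hane : a ≠ 0 := ha0.ne'
  have hbne : b ≠ 0 := hb0.ne'
  have e1 : (1 - (b/a)⁻¹) * (1/a) = 1/a - 1/b := by
    rw [inv_div]; field_simp
  have e2 : (b/a)⁻¹ * (1/a) = 1/b := by
    rw [inv_div]; field_simp
  rw [e1, e2]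

-- subadditivity of x ^ (1/q)
lemma rpow_inv_add_le {A B q : ℝ} (hA : 0 ≤ A) (hB : 0 ≤ B) (hq : 1 ≤ q) :
    (A + B) ^ (1/q) ≤ A ^ (1/q) + B ^ (1/q) := by
  lift A to NNReal using hA
  lift B to NNReal using hB
  have hq0 : q ≠ 0 := by positivity
  have key := NNReal.rpow_add_rpow_le_add (A ^ (1/q)) (B ^ (1/q)) hq
  rw [← NNReal.rpow_mul, ← NNReal.rpow_mul, one_div_mul_cancel hq0, NNReal.rpow_one,
    NNReal.rpow_one] at key
  calc ((A:ℝ) + B) ^ (1/q) = ((((A + B : NNReal)) : ℝ)) ^ (1/q) := by push_cast; ring_nf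
    _ = (((A + B) ^ (1/q) : NNReal) : ℝ) := by rw [NNReal.coe_rpow]
    _ ≤ _ := by exact_mod_cast key

-- splitting the q norm over a set and its complement
lemma lpnorm_split {α : Type*} [Fintype α] [DecidableEq α] (q : ℝ) (hq : 1 ≤ q)
    (T : Finset α) (u : α → ℂ) :
    lpnorm q Finset.univ u ≤ lpnorm q T u + lpnorm q Tᶜ u := by
  unfold lpnorm
  rw [← Finset.sum_add_sum_compl T (fun x => ‖u x‖ ^ q)]
  exact rpow_inv_add_le (Finset.sum_nonneg fun x _ => Real.rpow_nonneg (norm_nonneg _) _)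
    (Finset.sum_nonneg fun x _ => Real.rpow_nonneg (norm_nonneg _) _) hq

-- Minkowski
lemma lpnorm_add_le {α : Type*} (q : ℝ) (hq : 1 ≤ q) (T : Finset α) (u v : α → ℂ) :
    lpnorm q T (fun x => u x + v x) ≤ lpnorm q T u + lpnorm q T v := by
  have key := Real.Lp_add_le T (fun x => ‖u x‖) (fun x => ‖v x‖) hq
  simp only [abs_norm] at key
  refine le_trans ?_ key
  unfold lpnorm
  refine Real.rpow_le_rpow (Finset.sum_nonneg fun x _ => Real.rpow_nonneg (norm_nonneg _) _)
    (Finset.sum_le_sum fun x _ => ?_) (by positivity)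
  have h1 : ‖u x + v x‖ ≤ |‖u x‖ + ‖v x‖| := by
    rw [abs_of_nonneg (by positivity)]; exact norm_add_le _ _
  exact Real.rpow_le_rpow (norm_nonneg _) h1 (by positivity)

-- monotonicity in the set
lemma lpnorm_mono {α : Type*} (q : ℝ) (hq : 0 < q) {T T' : Finset α} (hT : T' ⊆ T)
    (u : α → ℂ) : lpnorm q T' u ≤ lpnorm q T u := by
  unfold lpnorm
  exact Real.rpow_le_rpow (Finset.sum_nonneg fun x _ => Real.rpow_nonneg (norm_nonneg _) _)
    (Finset.sum_le_sum_of_subset_of_nonneg hT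
      (fun x _ _ => Real.rpow_nonneg (norm_nonneg _) _)) (by positivity)

section Fourier
variable {G : Type} [AddCommGroup G] [Fintype G] [DecidableEq G]

lemma char_orth (x y : G) :
    ∑ χ : AddChar G ℂ, χ x * conj (χ y) = if x = y then (Fintype.card G : ℂ) else 0 := by
  have h : ∀ χ : AddChar G ℂ, χ x * conj (χ y) = χ (x - y) := by
    intro χ
    rw [← AddChar.map_neg_eq_conj, ← AddChar.map_add_eq_mul, sub_eq_add_neg]
  simp only [h]
  rw [AddChar.sum_apply_eq_ite]
  simp [sub_eq_zero]

lemma card_sqrt_ne : (Real.sqrt (Fintype.card G) : ℂ) ≠ 0 := by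
  have : (0:ℝ) < Real.sqrt (Fintype.card G) := Real.sqrt_pos.2 (by positivity)
  exact_mod_cast this.ne'

lemma parseval (g : G → ℂ) :
    ∑ χ : AddChar G ℂ, (‖dft g χ‖:ℝ) ^ 2 = ∑ x, ‖g x‖ ^ 2 := by
  have key : ∑ χ : AddChar G ℂ, dft g χ * conj (dft g χ) = ∑ x, g x * conj (g x) := by
    have hc : ∀ χ : AddChar G ℂ,
        dft g χ * conj (dft g χ) =
        ((Fintype.card G : ℂ))⁻¹ *
          ∑ x, ∑ y, g x * conj (g y) * (χ y * conj (χ x)) := by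
      intro χ
      unfold dft
      rw [map_mul, map_inv₀, Complex.conj_ofReal, map_sum]
      have hsq : ((Real.sqrt (Fintype.card G) : ℂ))⁻¹ * ((Real.sqrt (Fintype.card G) : ℂ))⁻¹
          = ((Fintype.card G : ℂ))⁻¹ := by
        rw [← mul_inv]
        congr 1
        rw [← Complex.ofReal_mul, Real.mul_self_sqrt (by positivity)]
        norm_num
      rw [mul_mul_mul_comm, hsq, Finset.sum_mul_sum]
      congr 1
      refine Finset.sum_congr rfl fun x _ => Finset.sum_congr rfl fun y _ => ?_
      simp only [map_mul, Complex.conj_conj]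
      ring
    rw [Finset.sum_congr rfl fun χ _ => hc χ]
    have hcard : (Fintype.card G : ℂ) ≠ 0 := Nat.cast_ne_zero.2 Fintype.card_ne_zero
    rw [← Finset.mul_sum, Finset.sum_comm]
    have hx : ∀ x : G, ∑ χ : AddChar G ℂ, ∑ y, g x * conj (g y) * (χ y * conj (χ x))
        = (Fintype.card G : ℂ) * (g x * conj (g x)) := by
      intro x
      rw [Finset.sum_comm]
      have hy : ∀ y : G, ∑ χ : AddChar G ℂ, g x * conj (g y) * (χ y * conj (χ x))
          = g x * conj (g y) * (if y = x then (Fintype.card G : ℂ) else 0) := by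
        intro y; rw [← Finset.mul_sum, char_orth]
      simp only [hy, mul_ite, mul_zero]
      rw [Finset.sum_ite_eq' Finset.univ x fun y => g x * conj (g y) * (Fintype.card G : ℂ)]
      simp only [Finset.mem_univ, if_true]
      ring
    simp only [hx]
    rw [← Finset.mul_sum, inv_mul_cancel_left₀ hcard]
  have h2 : ∀ z : ℂ, (z * conj z).re = ‖z‖ ^ 2 := by
    intro z
    rw [Complex.mul_conj, Complex.ofReal_re, Complex.normSq_eq_norm_sq]
  have h3 := congrArg Complex.re key
  rw [Complex.re_sum, Complex.re_sum] at h3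
  simpa only [h2] using h3


lemma inversion (g : G → ℂ) (x : G) :
    g x = (Real.sqrt (Fintype.card G) : ℂ)⁻¹ * ∑ χ : AddChar G ℂ, dft g χ * χ x := by
  have hcard : (Fintype.card G : ℂ) ≠ 0 := Nat.cast_ne_zero.2 Fintype.card_ne_zero
  have hsq : ((Real.sqrt (Fintype.card G) : ℂ))⁻¹ * ((Real.sqrt (Fintype.card G) : ℂ))⁻¹
      = ((Fintype.card G : ℂ))⁻¹ := by
    rw [← mul_inv]
    congr 1
    rw [← Complex.ofReal_mul, Real.mul_self_sqrt (by positivity)]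
    norm_num
  have hc : ∀ χ : AddChar G ℂ, dft g χ * χ x =
      (Real.sqrt (Fintype.card G) : ℂ) * (((Fintype.card G : ℂ))⁻¹ * ∑ y, g y * (χ x * conj (χ y))) := by
    intro χ
    have hmc : (Real.sqrt (Fintype.card G) : ℂ) * ((Fintype.card G : ℂ))⁻¹
        = ((Real.sqrt (Fintype.card G) : ℂ))⁻¹ := by
      rw [← hsq, ← mul_assoc, mul_inv_cancel₀ card_sqrt_ne, one_mul]
    unfold dft
    rw [← mul_assoc, hmc, mul_assoc]
    congr 1
    rw [Finset.sum_mul]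
    exact Finset.sum_congr rfl fun y _ => by ring
  rw [Finset.sum_congr rfl fun χ _ => hc χ, ← Finset.mul_sum, ← mul_assoc,
    inv_mul_cancel₀ card_sqrt_ne, one_mul, ← Finset.mul_sum, Finset.sum_comm]
  have hy : ∀ y : G, ∑ χ : AddChar G ℂ, g y * (χ x * conj (χ y))
      = g y * (if x = y then (Fintype.card G : ℂ) else 0) := by
    intro y; rw [← Finset.mul_sum, char_orth]
  simp only [hy, mul_ite, mul_zero]
  rw [Finset.sum_ite_eq Finset.univ x fun y => g y * (Fintype.card G : ℂ)]
  simp only [Finset.mem_univ, if_true]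
  rw [mul_comm (g x) _, inv_mul_cancel_left₀ hcard]

lemma sup_bound (g : G → ℂ) (x : G) :
    ‖g x‖ ≤ (Real.sqrt (Fintype.card G))⁻¹ * ∑ χ : AddChar G ℂ, ‖dft g χ‖ := by
  rw [inversion g x]
  rw [norm_mul]
  have h1 : ‖((Real.sqrt (Fintype.card G) : ℂ))⁻¹‖ = (Real.sqrt (Fintype.card G))⁻¹ := by
    rw [norm_inv, Complex.norm_real, Real.norm_of_nonneg (Real.sqrt_nonneg _)]
  rw [h1]
  refine mul_le_mul_of_nonneg_left ?_ (by positivity)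
  refine (norm_sum_le _ _).trans (Finset.sum_le_sum fun χ _ => ?_)
  rw [norm_mul, AddChar.norm_apply, mul_one]

lemma dft_add (g h : G → ℂ) (χ : AddChar G ℂ) :
    dft (fun x => g x + h x) χ = dft g χ + dft h χ := by
  unfold dft
  rw [← mul_add, ← Finset.sum_add_distrib]
  congr 1
  exact Finset.sum_congr rfl fun x _ => by ring

end Fourier

lemma lpnorm_one {α : Type*} (T : Finset α) (u : α → ℂ) :
    lpnorm 1 T u = ∑ x ∈ T, ‖u x‖ := by
  simp [lpnorm, Real.rpow_one]

lemma l2norm_add_le {α : Type*} (T : Finset α) (u v : α → ℂ) :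
    l2norm T (fun x => u x + v x) ≤ l2norm T u + l2norm T v := by
  rw [l2norm_eq_lpnorm, l2norm_eq_lpnorm, l2norm_eq_lpnorm]
  exact lpnorm_add_le 2 one_le_two T u v

theorem stmt4 {G : Type} [AddCommGroup G] [Fintype G] [DecidableEq G]
    (S : Finset G) (Sig : Finset (AddChar G ℂ))
    (p q ρ : ℝ) (hp : 1 ≤ p) (hp2 : p ≤ 2) (hq : 1 ≤ q) (hq2 : q ≤ 2) (hρ : 0 ≤ ρ)
    (hrest : ∀ g : G → ℂ, lpnorm q Sig (dft g) ≤ ρ * lpnorm p Finset.univ g)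
    (hsmall : ρ * (S.card : ℝ) ^ (1 / p) < (Fintype.card G : ℝ) ^ (1 / q - 1 / 2)) :
    ∀ f : G → ℂ,
      l2norm Finset.univ f ≤
        (1 + Real.sqrt S.card * (Sigᶜ.card : ℝ) ^ (1 / q - 1 / 2) /
            ((Fintype.card G : ℝ) ^ (1 / q - 1 / 2) - ρ * (S.card : ℝ) ^ (1 / p))) *
          (l2norm Sᶜ f + l2norm Sigᶜ (dft f)) := by
  intro f
  have hp0 : 0 < p := lt_of_lt_of_le one_pos hp
  have hq0 : 0 < q := lt_of_lt_of_le one_pos hq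
  have hcard0 : (0:ℝ) < (Fintype.card G : ℝ) := by
    exact_mod_cast Fintype.card_pos
  set g : G → ℂ := fun x => if x ∈ S then f x else 0 with hgdef
  set h : G → ℂ := fun x => if x ∈ S then 0 else f x with hhdef
  have hgh : ∀ x, g x + h x = f x := by
    intro x; by_cases hx : x ∈ S <;> simp [hgdef, hhdef, hx]
  set m : ℝ := (Fintype.card G : ℝ) ^ (1/q - 1/2) with hmdef
  have hm : 0 < m := Real.rpow_pos_of_pos hcard0 _
  set D : ℝ := m - ρ * (S.card : ℝ) ^ (1/p) with hDdef
  have hD : 0 < D := sub_pos.2 hsmall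
  set X : ℝ := l2norm Finset.univ g with hXdef
  set Y : ℝ := l2norm Sigᶜ (dft g) with hYdef
  set A : ℝ := l2norm Sᶜ f with hAdef
  set B : ℝ := l2norm Sigᶜ (dft f) with hBdef
  set Lq : ℝ := lpnorm q Finset.univ (dft g) with hLqdef
  have hX0 : 0 ≤ X := l2norm_nonneg _ _
  have hY0 : 0 ≤ Y := l2norm_nonneg _ _
  have hA0 : 0 ≤ A := l2norm_nonneg _ _
  have hB0 : 0 ≤ B := l2norm_nonneg _ _
  -- the sum over S of ‖g‖^2 is the full sum
  have hgS2 : ∑ x, ‖g x‖ ^ 2 = ∑ x ∈ S, ‖g x‖ ^ 2 :=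
    (Finset.sum_subset (Finset.subset_univ S) fun x _ hx => by
      simp [hgdef, hx]).symm
  -- step 1 : m * X ≤ √|S| * Lq
  set M : ℝ := (Real.sqrt (Fintype.card G))⁻¹ * ∑ χ : AddChar G ℂ, ‖dft g χ‖ with hMdef
  have hM0 : 0 ≤ M := by
    apply mul_nonneg (by positivity) (Finset.sum_nonneg fun χ _ => norm_nonneg _)
  have hXM : X ≤ Real.sqrt S.card * M := by
    have hb : ∑ x ∈ S, ‖g x‖ ^ 2 ≤ (S.card : ℝ) * M ^ 2 := by
      calc ∑ x ∈ S, ‖g x‖ ^ 2 ≤ ∑ _x ∈ S, M ^ 2 :=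
            Finset.sum_le_sum fun x _ => pow_le_pow_left₀ (norm_nonneg _) (sup_bound g x) 2
        _ = (S.card : ℝ) * M ^ 2 := by rw [Finset.sum_const, nsmul_eq_mul]
    calc X = Real.sqrt (∑ x ∈ S, ‖g x‖ ^ 2) := by rw [hXdef, l2norm, hgS2]
      _ ≤ Real.sqrt ((S.card : ℝ) * M ^ 2) := Real.sqrt_le_sqrt hb
      _ = Real.sqrt S.card * M := by
          rw [Real.sqrt_mul (Nat.cast_nonneg _), Real.sqrt_sq hM0]
  have hL1 : ∑ χ : AddChar G ℂ, ‖dft g χ‖ ≤ (Fintype.card G : ℝ) ^ (1 - 1/q) * Lq := by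
    have := lpnorm_le_lpnorm Finset.univ (dft g) (le_refl 1) hq
    rw [lpnorm_one] at this
    simpa [Finset.card_univ, AddChar.card_eq] using this
  have step1 : m * X ≤ Real.sqrt S.card * Lq := by
    have hLq0 : 0 ≤ Lq := lpnorm_nonneg _ _ _
    have hXM2 : X ≤ Real.sqrt S.card * ((Real.sqrt (Fintype.card G))⁻¹ *
        ((Fintype.card G : ℝ) ^ (1 - 1/q) * Lq)) := by
      refine hXM.trans (mul_le_mul_of_nonneg_left ?_ (Real.sqrt_nonneg _))
      rw [hMdef]
      exact mul_le_mul_of_nonneg_left hL1 (by positivity)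
    have hkey : m * ((Real.sqrt (Fintype.card G))⁻¹ * (Fintype.card G : ℝ) ^ (1 - 1/q)) = 1 := by
      rw [hmdef, Real.sqrt_eq_rpow, ← Real.rpow_neg hcard0.le, ← Real.rpow_add hcard0,
        ← Real.rpow_add hcard0]
      rw [show 1/q - 1/2 + (-(1/2) + (1 - 1/q)) = 0 by ring, Real.rpow_zero]
    calc m * X ≤ m * (Real.sqrt S.card * ((Real.sqrt (Fintype.card G))⁻¹ *
          ((Fintype.card G : ℝ) ^ (1 - 1/q) * Lq))) :=
          mul_le_mul_of_nonneg_left hXM2 hm.le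
      _ = (m * ((Real.sqrt (Fintype.card G))⁻¹ * (Fintype.card G : ℝ) ^ (1 - 1/q))) *
          (Real.sqrt S.card * Lq) := by ring
      _ = Real.sqrt S.card * Lq := by rw [hkey, one_mul]
  -- step 2 : split
  have step2 : Lq ≤ lpnorm q Sig (dft g) + lpnorm q Sigᶜ (dft g) :=
    lpnorm_split q hq Sig (dft g)
  -- step 3 : restriction estimate
  have step3 : lpnorm q Sig (dft g) ≤ ρ * ((S.card : ℝ) ^ (1/p - 1/2) * X) := by
    refine (hrest g).trans (mul_le_mul_of_nonneg_left ?_ hρ)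
    have e1 : lpnorm p Finset.univ g = lpnorm p S g := by
      unfold lpnorm
      congr 1
      exact (Finset.sum_subset (Finset.subset_univ S) fun x _ hx => by
        simp only [hgdef, hx, if_false, norm_zero]
        exact Real.zero_rpow hp0.ne').symm
    have e2 : lpnorm 2 S g = X := by
      rw [hXdef, l2norm_eq_lpnorm]
      unfold lpnorm
      congr 1
      exact Finset.sum_subset (Finset.subset_univ S) fun x _ hx => by
        simp only [hgdef, hx, if_false, norm_zero]
        exact Real.zero_rpow two_ne_zero
    rw [e1, ← e2]
    exact lpnorm_le_lpnorm S g hp hp2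
  -- step 4
  have step4 : lpnorm q Sigᶜ (dft g) ≤ (Sigᶜ.card : ℝ) ^ (1/q - 1/2) * Y := by
    rw [hYdef, l2norm_eq_lpnorm]
    exact lpnorm_le_lpnorm Sigᶜ (dft g) hq hq2
  -- combine 1-4 : X ≤ c * Y
  have hSpow : Real.sqrt S.card * (S.card : ℝ) ^ (1/p - 1/2) = (S.card : ℝ) ^ (1/p) := by
    have hne : (1:ℝ)/2 + (1/p - 1/2) ≠ 0 := by
      rw [show (1:ℝ)/2 + (1/p - 1/2) = 1/p by ring]; positivity
    rw [Real.sqrt_eq_rpow, ← Real.rpow_add' (Nat.cast_nonneg _) hne,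
      show (1:ℝ)/2 + (1/p - 1/2) = 1/p by ring]
  have hDX : D * X ≤ Real.sqrt S.card * (Sigᶜ.card : ℝ) ^ (1/q - 1/2) * Y := by
    have hthis := step1.trans <| (mul_le_mul_of_nonneg_left (step2.trans
      (add_le_add step3 step4)) (Real.sqrt_nonneg (S.card : ℝ)))
    have e : Real.sqrt S.card * (ρ * ((S.card : ℝ) ^ (1/p - 1/2) * X) +
        (Sigᶜ.card : ℝ) ^ (1/q - 1/2) * Y) =
        ρ * (Real.sqrt S.card * (S.card : ℝ) ^ (1/p - 1/2)) * X +
        Real.sqrt S.card * (Sigᶜ.card : ℝ) ^ (1/q - 1/2) * Y := by ring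
    rw [e, hSpow] at hthis
    have e2 : D * X = m * X - ρ * (S.card : ℝ) ^ (1/p) * X := by rw [hDdef]; ring
    linarith
  have hXY : X ≤ (Real.sqrt S.card * (Sigᶜ.card : ℝ) ^ (1/q - 1/2) / D) * Y := by
    rw [div_mul_eq_mul_div, le_div_iff₀ hD]
    linarith [hDX]
  -- step 5 : Y ≤ B + A
  have hdfg : ∀ χ, dft g χ = dft f χ + -(dft h χ) := by
    intro χ
    have : dft f χ = dft g χ + dft h χ := by
      rw [show f = (fun x => g x + h x) from (funext hgh).symm]
      exact dft_add g h χ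
    rw [this]; ring
  have hYBA : Y ≤ B + A := by
    have t1 : Y = l2norm Sigᶜ (fun χ => dft f χ + -(dft h χ)) := by
      rw [hYdef]
      congr 1
      exact funext hdfg
    have t2 : l2norm Sigᶜ (fun χ => -(dft h χ)) = l2norm Sigᶜ (dft h) := by
      unfold l2norm; simp
    have t3 : l2norm Sigᶜ (dft h) ≤ l2norm Finset.univ (dft h) := by
      rw [l2norm_eq_lpnorm, l2norm_eq_lpnorm]
      exact lpnorm_mono 2 two_pos (Finset.subset_univ _) _
    have t4 : l2norm Finset.univ (dft h) = l2norm Finset.univ h := by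
      unfold l2norm; rw [parseval]
    have t5 : l2norm Finset.univ h = A := by
      rw [hAdef]; unfold l2norm
      congr 1
      refine (Finset.sum_subset (Finset.subset_univ Sᶜ) fun x _ hx => ?_).symm.trans ?_
      · have : x ∈ S := by simpa using hx
        simp [hhdef, this]
      · refine Finset.sum_congr rfl fun x hx => ?_
        have : x ∉ S := Finset.mem_compl.1 hx
        simp [hhdef, this]
    calc Y = l2norm Sigᶜ (fun χ => dft f χ + -(dft h χ)) := t1
      _ ≤ B + l2norm Sigᶜ (fun χ => -(dft h χ)) := l2norm_add_le _ _ _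
      _ = B + l2norm Sigᶜ (dft h) := by rw [t2]
      _ ≤ B + l2norm Finset.univ (dft h) := add_le_add_right t3 B
      _ = B + A := by rw [t4, t5]
  -- step 6 : triangle
  have hfXA : l2norm Finset.univ f ≤ X + A := by
    have t5 : l2norm Finset.univ h = A := by
      rw [hAdef]; unfold l2norm
      congr 1
      refine (Finset.sum_subset (Finset.subset_univ Sᶜ) fun x _ hx => ?_).symm.trans ?_
      · have : x ∈ S := by simpa using hx
        simp [hhdef, this]
      · refine Finset.sum_congr rfl fun x hx => ?_
        have : x ∉ S := Finset.mem_compl.1 hx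
        simp [hhdef, this]
    calc l2norm Finset.univ f = l2norm Finset.univ (fun x => g x + h x) := by
          congr 1; exact (funext hgh).symm
      _ ≤ X + l2norm Finset.univ h := l2norm_add_le _ _ _
      _ = X + A := by rw [t5]
  -- finish
  have hc0 : 0 ≤ Real.sqrt S.card * (Sigᶜ.card : ℝ) ^ (1/q - 1/2) / D := by positivity
  have final : l2norm Finset.univ f ≤
      (1 + Real.sqrt S.card * (Sigᶜ.card : ℝ) ^ (1/q - 1/2) / D) * (A + B) := by
    set c := Real.sqrt S.card * (Sigᶜ.card : ℝ) ^ (1/q - 1/2) / D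
    have hcY : X ≤ c * Y := hXY
    have last : (1 + c) * (A + B) = c * (B + A) + A + B := by ring
    calc l2norm Finset.univ f ≤ X + A := hfXA
      _ ≤ c * Y + A := add_le_add_left hcY A
      _ ≤ c * (B + A) + A := add_le_add_left (mul_le_mul_of_nonneg_left hYBA hc0) A
      _ ≤ (1 + c) * (A + B) := by rw [last]; linarith
  exact final
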